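/- Fix a signal intensity μ_s > 0 and let 0 < μ₁ < μ₂ < μ_s < μ₃ < μ₄. Assume ĉ(μ_s,μ₄) > 0 and b̂(μ_s)/(ĉ(μ_s,μ₄) + b̂(μ_s)) < 1/2. Then the asymptotic key generation rate R satisfies the chain R(μ_s,μ₁) ≥ R(μ_s,μ₂) ≥ R(μ_s,μ₃) ≥ R(μ_s,μ₄); i.e., for fixed μ_s the rate R(μ_s,μ_d) is monotonically decreasing in the decoy intensity μ_d. -/

import Mathlib

/-- Binary entropy function (base-2). Note `Real.logb 2 0 = 0`, so `binEnt 0 = binEnt 1 = 0`. -/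
noncomputable def binEnt (x : ℝ) : ℝ :=
  -x * Real.logb 2 x - (1 - x) * Real.logb 2 (1 - x)

/-- Estimate `b̂(μ)` of the phase-error detection rate of the single photon pulse. -/
noncomputable def bHat (α s p₀ μ : ℝ) : ℝ :=
  (s * (1 - Real.exp (-α * μ)) * Real.exp μ + (p₀ / 2) * (Real.exp μ - 1)) / μ

/-- Estimate `ĉ(μ₁,μ₂)` of the rate that the single photon pulse is detected
without phase error. -/
noncomputable def cHat (α s p₀ μ₁ μ₂ : ℝ) : ℝ :=
  (μ₂ ^ 2 * Real.exp μ₁ * ((1 - s) * (1 - Real.exp (-α * μ₁)) + (p₀ / 2) * (1 - Real.exp (-μ₁)))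
    - μ₁ ^ 2 * Real.exp μ₂ * ((1 - s) * (1 - Real.exp (-α * μ₂)) + (p₀ / 2) * (1 - Real.exp (-μ₂))))
  / (μ₁ * μ₂ * (μ₂ - μ₁))

/-- Detection rate `p₊(μ)` of a pulse of intensity `μ`. -/
noncomputable def pPlus (α p₀ μ : ℝ) : ℝ := 1 - Real.exp (-α * μ) + p₀

/-- Error rate `e₊(μ)` of a pulse of intensity `μ`. -/
noncomputable def ePlus (α s p₀ μ : ℝ) : ℝ :=
  (s * (1 - Real.exp (-α * μ)) + p₀ / 2) / pPlus α p₀ μ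

/-- The (improved) asymptotic key generation rate `R(μ_s, μ_d)`. -/
noncomputable def Rrate (α s p₀ η μs μd : ℝ) : ℝ :=
  if μd < μs then
    μs * Real.exp (-μs) * (cHat α s p₀ μd μs + bHat α s p₀ μd) *
        (1 - binEnt (bHat α s p₀ μd / (cHat α s p₀ μd μs + bHat α s p₀ μd)))
      + Real.exp (-μs) * p₀ - pPlus α p₀ μs * η * binEnt (ePlus α s p₀ μs)
  else
    μs * Real.exp (-μs) * (cHat α s p₀ μs μd + bHat α s p₀ μs) *
        (1 - binEnt (bHat α s p₀ μs / (cHat α s p₀ μs μd + bHat α s p₀ μs)))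
      + Real.exp (-μs) * p₀ - pPlus α p₀ μs * η * binEnt (ePlus α s p₀ μs)

/-! ### Auxiliary lemmas -/

noncomputable def Jf (c b : ℝ) : ℝ :=
  c + b + (b * Real.log b + c * Real.log c - (c + b) * Real.log (c + b)) / Real.log 2

lemma log2_pos : 0 < Real.log 2 := Real.log_pos (by norm_num)

lemma ent_eq {b c : ℝ} (hb : 0 < b) (hc : 0 < c) :
    (c + b) * (1 - binEnt (b / (c + b))) = Jf c b := by
  have hcb : (0:ℝ) < c + b := by linarith
  have h1 : 1 - b / (c + b) = c / (c + b) := by field_simp; ring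
  rw [binEnt, Jf, h1, Real.logb, Real.logb, Real.log_div hb.ne' hcb.ne',
    Real.log_div hc.ne' hcb.ne']
  field_simp
  ring

lemma J_mono_c {b c₂ c₁ : ℝ} (hb : 0 < b) (h1 : b ≤ c₂) (h2 : c₂ ≤ c₁) :
    Jf c₂ b ≤ Jf c₁ b := by
  have key : MonotoneOn (fun c => Jf c b) (Set.Icc c₂ c₁) := by
    apply monotoneOn_of_deriv_nonneg (convex_Icc _ _)
    · apply Continuous.continuousOn
      unfold Jf
      have h3 : Continuous fun c : ℝ => (c + b) * Real.log (c + b) :=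
        Real.continuous_mul_log.comp (continuous_id.add continuous_const)
      fun_prop
    · intro x hx
      rw [interior_Icc] at hx
      have hx0 : 0 < x := lt_of_lt_of_le hb (le_of_lt (lt_of_le_of_lt h1 hx.1))
      have hd : HasDerivAt (fun c => Jf c b)
          (1 + (0 + (Real.log x + 1) - ((Real.log (x + b) + 1) * 1)) / Real.log 2) x := by
        unfold Jf
        have hxb : x + b ≠ 0 := by positivity
        have h4 : HasDerivAt (fun c : ℝ => (c + b) * Real.log (c + b))
            ((Real.log (x + b) + 1) * 1) x :=
          by simpa [Function.comp_def] using (Real.hasDerivAt_mul_log hxb).comp x ((hasDerivAt_id x).add_const b)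
        have h5 : HasDerivAt (fun c : ℝ => b * Real.log b + c * Real.log c)
            (0 + (Real.log x + 1)) x :=
          (hasDerivAt_const x _).add (Real.hasDerivAt_mul_log hx0.ne')
        exact (((hasDerivAt_id x).add_const b).add (((h5.sub h4)).div_const _))
      exact hd.differentiableAt.differentiableWithinAt
    · intro x hx
      rw [interior_Icc] at hx
      have hbx : b < x := lt_of_le_of_lt h1 hx.1
      have hx0 : 0 < x := lt_trans hb hbx
      have hxb : x + b ≠ 0 := by positivity
      have hd : HasDerivAt (fun c => Jf c b)
          (1 + (0 + (Real.log x + 1) - ((Real.log (x + b) + 1) * 1)) / Real.log 2) x := by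
        unfold Jf
        have h4 : HasDerivAt (fun c : ℝ => (c + b) * Real.log (c + b))
            ((Real.log (x + b) + 1) * 1) x :=
          by simpa [Function.comp_def] using (Real.hasDerivAt_mul_log hxb).comp x ((hasDerivAt_id x).add_const b)
        have h5 : HasDerivAt (fun c : ℝ => b * Real.log b + c * Real.log c)
            (0 + (Real.log x + 1)) x :=
          (hasDerivAt_const x _).add (Real.hasDerivAt_mul_log hx0.ne')
        exact (((hasDerivAt_id x).add_const b).add (((h5.sub h4)).div_const _))
      rw [hd.deriv]
      have hlog : Real.log (x + b) - Real.log x ≤ Real.log 2 := by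
        have h6 : Real.log (x + b) ≤ Real.log (2 * x) :=
          Real.log_le_log (by positivity) (by linarith)
        rw [Real.log_mul two_ne_zero hx0.ne'] at h6
        linarith
      have : 0 ≤ 1 + (Real.log x - Real.log (x + b)) / Real.log 2 := by
        have h7 : (Real.log (x + b) - Real.log x) / Real.log 2 ≤ 1 :=
          div_le_one_of_le₀ hlog log2_pos.le
        have h8 : (Real.log x - Real.log (x + b)) / Real.log 2
            = -((Real.log (x + b) - Real.log x) / Real.log 2) := by ring
        rw [h8]; linarith
      convert this using 2
      ring
  calc Jf c₂ b = (fun c => Jf c b) c₂ := rfl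
    _ ≤ (fun c => Jf c b) c₁ := key (Set.left_mem_Icc.2 h2) (Set.right_mem_Icc.2 h2) h2

lemma J_anti_b {b₁ b₂ c : ℝ} (hb1 : 0 < b₁) (h1 : b₁ ≤ b₂) (h2 : b₂ ≤ c) :
    Jf c b₂ ≤ Jf c b₁ := by
  have key : AntitoneOn (fun b => Jf c b) (Set.Icc b₁ b₂) := by
    apply antitoneOn_of_deriv_nonpos (convex_Icc _ _)
    · apply Continuous.continuousOn
      unfold Jf
      have h3 : Continuous fun b : ℝ => (c + b) * Real.log (c + b) :=
        Real.continuous_mul_log.comp (continuous_const.add continuous_id)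
      fun_prop
    · intro x hx
      rw [interior_Icc] at hx
      have hx0 : 0 < x := lt_trans hb1 hx.1
      have hc0 : 0 < c := lt_of_lt_of_le (lt_of_lt_of_le hx0 hx.2.le) h2
      have hxc : c + x ≠ 0 := by positivity
      have hd : HasDerivAt (fun b => Jf c b)
          (1 + ((Real.log x + 1) + 0 - (Real.log (c + x) + 1) * 1) / Real.log 2) x := by
        unfold Jf
        have h4 : HasDerivAt (fun b : ℝ => (c + b) * Real.log (c + b))
            ((Real.log (c + x) + 1) * 1) x :=
          (Real.hasDerivAt_mul_log hxc).comp x ((hasDerivAt_id x).const_add c)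
        have h5 : HasDerivAt (fun b : ℝ => b * Real.log b + c * Real.log c)
            ((Real.log x + 1) + 0) x :=
          (Real.hasDerivAt_mul_log hx0.ne').add (hasDerivAt_const x _)
        exact (((hasDerivAt_id x).const_add c).add ((h5.sub h4).div_const _))
      exact hd.differentiableAt.differentiableWithinAt
    · intro x hx
      rw [interior_Icc] at hx
      have hx0 : 0 < x := lt_trans hb1 hx.1
      have hxc2 : x ≤ c := le_trans hx.2.le h2
      have hc0 : 0 < c := lt_of_lt_of_le hx0 hxc2
      have hxc : c + x ≠ 0 := by positivity
      have hd : HasDerivAt (fun b => Jf c b)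
          (1 + ((Real.log x + 1) + 0 - (Real.log (c + x) + 1) * 1) / Real.log 2) x := by
        unfold Jf
        have h4 : HasDerivAt (fun b : ℝ => (c + b) * Real.log (c + b))
            ((Real.log (c + x) + 1) * 1) x :=
          (Real.hasDerivAt_mul_log hxc).comp x ((hasDerivAt_id x).const_add c)
        have h5 : HasDerivAt (fun b : ℝ => b * Real.log b + c * Real.log c)
            ((Real.log x + 1) + 0) x :=
          (Real.hasDerivAt_mul_log hx0.ne').add (hasDerivAt_const x _)
        exact (((hasDerivAt_id x).const_add c).add ((h5.sub h4).div_const _))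
      rw [hd.deriv]
      have hlog : Real.log 2 ≤ Real.log (c + x) - Real.log x := by
        have h6 : Real.log (2 * x) ≤ Real.log (c + x) :=
          Real.log_le_log (by positivity) (by linarith)
        rw [Real.log_mul two_ne_zero hx0.ne'] at h6
        linarith
      have h7 : 1 ≤ (Real.log (c + x) - Real.log x) / Real.log 2 :=
        (one_le_div log2_pos).2 hlog
      have h8 : ((Real.log x + 1) + 0 - (Real.log (c + x) + 1) * 1) / Real.log 2
          = -((Real.log (c + x) - Real.log x) / Real.log 2) := by ring
      rw [h8]; linarith
  exact key (Set.left_mem_Icc.2 h1) (Set.right_mem_Icc.2 h1) h1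

/-- The combined entropy-rate monotonicity lemma: increasing `c` and decreasing `b`
increases `(c+b)(1 - h(b/(c+b)))`, provided `b ≤ c` throughout. -/
lemma key_ent {b' b c' c : ℝ} (hb' : 0 < b') (hbb : b' ≤ b) (hbc : b ≤ c') (hcc : c' ≤ c) :
    (c' + b) * (1 - binEnt (b / (c' + b))) ≤ (c + b') * (1 - binEnt (b' / (c + b'))) := by
  have hb : 0 < b := lt_of_lt_of_le hb' hbb
  have hc' : 0 < c' := lt_of_lt_of_le hb hbc
  have hc : 0 < c := lt_of_lt_of_le hc' hcc
  rw [ent_eq hb hc', ent_eq hb' hc]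
  exact le_trans (J_mono_c hb hbc hcc) (J_anti_b hb' hbb (le_trans hbc hcc))

/-! ### Monotonicity of `bHat` -/

lemma w_mono : MonotoneOn (fun t : ℝ => (t - 1) * Real.exp t) (Set.Ici 0) := by
  apply monotoneOn_of_deriv_nonneg (convex_Ici _)
  · fun_prop
  · intro x _
    exact (((hasDerivAt_id x).sub_const 1).mul
      (Real.hasDerivAt_exp x)).differentiableAt.differentiableWithinAt
  · intro x hx
    rw [interior_Ici] at hx
    have hd : HasDerivAt (fun t : ℝ => (t - 1) * Real.exp t)
        (1 * Real.exp x + (x - 1) * Real.exp x) x :=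
      ((hasDerivAt_id x).sub_const 1).mul (Real.hasDerivAt_exp x)
    rw [hd.deriv]
    have : 1 * Real.exp x + (x - 1) * Real.exp x = x * Real.exp x := by ring
    rw [this]
    exact mul_nonneg hx.le (Real.exp_pos x).le

lemma bHat_eq {α s p₀ μ : ℝ} :
    bHat α s p₀ μ
      = (s * (Real.exp μ - Real.exp ((1 - α) * μ)) + p₀ / 2 * (Real.exp μ - 1)) / μ := by
  have h : Real.exp ((1 - α) * μ) = Real.exp (-α * μ) * Real.exp μ := by
    rw [← Real.exp_add]; ring_nf
  rw [bHat, h]; ring_nf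

lemma bHat_hasDeriv {α s p₀ : ℝ} {x : ℝ} (hx : x ≠ 0) :
    HasDerivAt (fun μ => bHat α s p₀ μ)
      (((s * (Real.exp x - (1 - α) * Real.exp ((1 - α) * x)) + p₀ / 2 * Real.exp x) * x
        - (s * (Real.exp x - Real.exp ((1 - α) * x)) + p₀ / 2 * (Real.exp x - 1)) * 1)
        / x ^ 2) x := by
  have hfun : (fun μ => bHat α s p₀ μ)
      = fun μ => (s * (Real.exp μ - Real.exp ((1 - α) * μ)) + p₀ / 2 * (Real.exp μ - 1)) / μ := by
    funext μ; exact bHat_eq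
  rw [hfun]
  have h1 : HasDerivAt (fun μ : ℝ => Real.exp ((1 - α) * μ))
      ((1 - α) * Real.exp ((1 - α) * x)) x := by
    have h := (((hasDerivAt_id x).const_mul (1 - α))).exp
    refine h.congr_deriv ?_
    show Real.exp ((1 - α) * x) * ((1 - α) * 1) = (1 - α) * Real.exp ((1 - α) * x); ring
  have hnum : HasDerivAt
      (fun μ : ℝ => s * (Real.exp μ - Real.exp ((1 - α) * μ)) + p₀ / 2 * (Real.exp μ - 1))
      (s * (Real.exp x - (1 - α) * Real.exp ((1 - α) * x)) + p₀ / 2 * Real.exp x) x := by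
    have h2 := (((Real.hasDerivAt_exp x).sub h1).const_mul s).add
      (((Real.hasDerivAt_exp x).sub_const 1).const_mul (p₀ / 2))
    exact h2
  exact hnum.div (hasDerivAt_id x) hx

lemma bHat_mono {α s p₀ : ℝ} (hα : 0 < α) (hα1 : α ≤ 1) (hs0 : 0 ≤ s) (hp : 0 ≤ p₀)
    {a b : ℝ} (ha : 0 < a) (hab : a ≤ b) : bHat α s p₀ a ≤ bHat α s p₀ b := by
  have key : MonotoneOn (fun μ => bHat α s p₀ μ) (Set.Icc a b) := by
    apply monotoneOn_of_deriv_nonneg (convex_Icc _ _)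
    · intro x hx
      have hx0 : x ≠ 0 := (lt_of_lt_of_le ha hx.1).ne'
      exact (bHat_hasDeriv hx0).continuousAt.continuousWithinAt
    · intro x hx
      rw [interior_Icc] at hx
      exact (bHat_hasDeriv (lt_trans ha hx.1).ne').differentiableAt.differentiableWithinAt
    · intro x hx
      rw [interior_Icc] at hx
      have hx0 : 0 < x := lt_trans ha hx.1
      rw [(bHat_hasDeriv hx0.ne').deriv]
      apply div_nonneg _ (by positivity)
      have hw1 : ((1 - α) * x - 1) * Real.exp ((1 - α) * x) ≤ (x - 1) * Real.exp x := by
        apply w_mono (Set.mem_Ici.2 (mul_nonneg (by linarith) hx0.le)) (Set.mem_Ici.2 hx0.le)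
        nlinarith
      have hw2 : (0 - 1) * Real.exp 0 ≤ (x - 1) * Real.exp x :=
        w_mono (Set.mem_Ici.2 le_rfl) (Set.mem_Ici.2 hx0.le) hx0.le
      rw [Real.exp_zero] at hw2
      nlinarith [Real.exp_pos x, Real.exp_pos ((1 - α) * x)]
  exact key (Set.left_mem_Icc.2 hab) (Set.right_mem_Icc.2 hab) hab

lemma bHat_pos {α s p₀ : ℝ} (hα : 0 < α) (hs0 : 0 ≤ s) (hp : 0 < p₀) {μ : ℝ} (hμ : 0 < μ) :
    0 < bHat α s p₀ μ := by
  rw [bHat]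
  apply div_pos _ hμ
  have h1 : Real.exp (-α * μ) ≤ 1 := Real.exp_le_one_iff.2 (by nlinarith)
  have h2 : 1 < Real.exp μ := Real.one_lt_exp_iff.2 hμ
  nlinarith [mul_nonneg (mul_nonneg hs0 (by linarith : (0:ℝ) ≤ 1 - Real.exp (-α * μ)))
    (Real.exp_pos μ).le]

/-! ### Convexity of the auxiliary function `G` and the slope representation of `cHat` -/

noncomputable def Gfun (s p₀ β x : ℝ) : ℝ :=
  (1 - s) * (x ^ 2 * Real.exp (1 / x) - x ^ 2 * Real.exp (β / x))
    + p₀ / 2 * (x ^ 2 * Real.exp (1 / x) - x ^ 2 * Real.exp (0 / x))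

lemma hasDerivAt_H (c : ℝ) {x : ℝ} (hx : x ≠ 0) :
    HasDerivAt (fun y : ℝ => y ^ 2 * Real.exp (c / y)) (Real.exp (c / x) * (2 * x - c)) x := by
  have h1 : HasDerivAt (fun y : ℝ => c / y) (-(c / x ^ 2)) x := by
    have := (hasDerivAt_inv hx).const_mul c
    simpa [div_eq_mul_inv, mul_comm] using this
  have h2 := h1.exp
  have h3 := (hasDerivAt_pow 2 x).mul h2
  refine h3.congr_deriv ?_
  field_simp
  ring

lemma hasDerivAt_D (c : ℝ) {x : ℝ} (hx : x ≠ 0) :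
    HasDerivAt (fun y : ℝ => Real.exp (c / y) * (2 * y - c))
      (Real.exp (c / x) * ((c / x) ^ 2 - 2 * (c / x) + 2)) x := by
  have h1 : HasDerivAt (fun y : ℝ => c / y) (-(c / x ^ 2)) x := by
    have := (hasDerivAt_inv hx).const_mul c
    simpa [div_eq_mul_inv, mul_comm] using this
  have h3 := h1.exp.mul (((hasDerivAt_id x).const_mul 2).sub_const c)
  refine h3.congr_deriv ?_
  simp only [id_eq]
  field_simp
  ring

lemma Q_mono : Monotone (fun t : ℝ => Real.exp t * (t ^ 2 - 2 * t + 2)) := by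
  have hd : ∀ t : ℝ, HasDerivAt (fun t : ℝ => Real.exp t * (t ^ 2 - 2 * t + 2))
      (Real.exp t * t ^ 2) t := by
    intro t
    have h := (Real.hasDerivAt_exp t).mul
      (((hasDerivAt_pow 2 t).sub ((hasDerivAt_id t).const_mul 2)).add_const 2)
    refine h.congr_deriv ?_
    simp only [id_eq, Pi.sub_apply]
    ring
  apply monotone_of_deriv_nonneg (fun t => (hd t).differentiableAt)
  intro t
  rw [(hd t).deriv]
  positivity

lemma Gfun_hasDeriv {s p₀ β : ℝ} {x : ℝ} (hx : x ≠ 0) :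
    HasDerivAt (fun y => Gfun s p₀ β y)
      ((1 - s) * (Real.exp (1 / x) * (2 * x - 1) - Real.exp (β / x) * (2 * x - β))
        + p₀ / 2 * (Real.exp (1 / x) * (2 * x - 1) - Real.exp (0 / x) * (2 * x - 0))) x := by
  exact (((hasDerivAt_H 1 hx).sub (hasDerivAt_H β hx)).const_mul (1 - s)).add
    (((hasDerivAt_H 1 hx).sub (hasDerivAt_H 0 hx)).const_mul (p₀ / 2))

noncomputable def Gderiv (s p₀ β x : ℝ) : ℝ :=
  (1 - s) * (Real.exp (1 / x) * (2 * x - 1) - Real.exp (β / x) * (2 * x - β))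
    + p₀ / 2 * (Real.exp (1 / x) * (2 * x - 1) - Real.exp (0 / x) * (2 * x - 0))

lemma Gderiv_hasDeriv {s p₀ β : ℝ} {x : ℝ} (hx : x ≠ 0) :
    HasDerivAt (fun y => Gderiv s p₀ β y)
      ((1 - s) * (Real.exp (1 / x) * ((1 / x) ^ 2 - 2 * (1 / x) + 2)
          - Real.exp (β / x) * ((β / x) ^ 2 - 2 * (β / x) + 2))
        + p₀ / 2 * (Real.exp (1 / x) * ((1 / x) ^ 2 - 2 * (1 / x) + 2)
          - Real.exp (0 / x) * ((0 / x) ^ 2 - 2 * (0 / x) + 2))) x := by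
  exact (((hasDerivAt_D 1 hx).sub (hasDerivAt_D β hx)).const_mul (1 - s)).add
    (((hasDerivAt_D 1 hx).sub (hasDerivAt_D 0 hx)).const_mul (p₀ / 2))

lemma Gfun_convex {s p₀ β : ℝ} (hs : s ≤ 1) (hp : 0 ≤ p₀) (hβ0 : 0 ≤ β) (hβ1 : β ≤ 1) :
    ConvexOn ℝ (Set.Ioi 0) (Gfun s p₀ β) := by
  apply convexOn_of_hasDerivWithinAt2_nonneg (convex_Ioi 0) (f' := fun x => Gderiv s p₀ β x)
    (f'' := fun x => (1 - s) * (Real.exp (1 / x) * ((1 / x) ^ 2 - 2 * (1 / x) + 2)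
          - Real.exp (β / x) * ((β / x) ^ 2 - 2 * (β / x) + 2))
        + p₀ / 2 * (Real.exp (1 / x) * ((1 / x) ^ 2 - 2 * (1 / x) + 2)
          - Real.exp (0 / x) * ((0 / x) ^ 2 - 2 * (0 / x) + 2)))
  · intro x hx
    exact (Gfun_hasDeriv (ne_of_gt hx)).continuousAt.continuousWithinAt
  · intro x hx
    rw [interior_Ioi] at hx
    exact (Gfun_hasDeriv (ne_of_gt hx)).hasDerivWithinAt
  · intro x hx
    rw [interior_Ioi] at hx
    exact (Gderiv_hasDeriv (ne_of_gt hx)).hasDerivWithinAt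
  · intro x hx
    rw [interior_Ioi] at hx
    have hx0 : (0:ℝ) < x := hx
    have hb1 : β / x ≤ 1 / x := by gcongr
    have hb2 : (0:ℝ) / x ≤ 1 / x := by gcongr; norm_num
    have hq1 : Real.exp (β / x) * ((β / x) ^ 2 - 2 * (β / x) + 2)
        ≤ Real.exp (1 / x) * ((1 / x) ^ 2 - 2 * (1 / x) + 2) := by
      simpa using Q_mono hb1
    have hq2 : Real.exp ((0:ℝ) / x) * (((0:ℝ) / x) ^ 2 - 2 * ((0:ℝ) / x) + 2)
        ≤ Real.exp (1 / x) * ((1 / x) ^ 2 - 2 * (1 / x) + 2) := by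
      simpa using Q_mono hb2
    have h1 := mul_nonneg (by linarith : (0:ℝ) ≤ 1 - s) (sub_nonneg.2 hq1)
    have h2 := mul_nonneg (by linarith : (0:ℝ) ≤ p₀ / 2) (sub_nonneg.2 hq2)
    simp only [mul_sub] at h1 h2 ⊢
    linarith

lemma cHat_eq_slope {α s p₀ a b : ℝ} (ha : 0 < a) (hab : a < b) :
    cHat α s p₀ a b
      = (Gfun s p₀ (1 - α) (1 / a) - Gfun s p₀ (1 - α) (1 / b)) / (1 / a - 1 / b) := by
  have hb : 0 < b := lt_trans ha hab
  have h1 : Real.exp (-α * a) = Real.exp ((1 - α) * a) / Real.exp a := by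
    rw [eq_div_iff (Real.exp_ne_zero a), ← Real.exp_add]; ring_nf
  have h2 : Real.exp (-α * b) = Real.exp ((1 - α) * b) / Real.exp b := by
    rw [eq_div_iff (Real.exp_ne_zero b), ← Real.exp_add]; ring_nf
  have hne : 1 / a - 1 / b ≠ 0 := by
    have : 1 / b < 1 / a := by gcongr
    linarith
  rw [cHat, Gfun, Gfun, h1, h2, Real.exp_neg a, Real.exp_neg b]
  simp only [one_div_one_div, div_div_eq_mul_div, div_one, zero_div, Real.exp_zero]
  rw [div_eq_div_iff (mul_pos (mul_pos ha hb) (sub_pos.2 hab)).ne' hne]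
  field_simp
  simp only [mul_zero, Real.exp_zero]
  ring

/-! ### Main theorem -/

theorem stmt2 (α s p₀ η μs μ₁ μ₂ μ₃ μ₄ : ℝ)
    (hα : 0 < α) (hα1 : α ≤ 1) (hs0 : 0 ≤ s) (hs : s < 1 / 2) (hp : 0 < p₀) (hη : 0 ≤ η)
    (hμ₁ : 0 < μ₁) (h₁₂ : μ₁ < μ₂) (h₂s : μ₂ < μs) (hs₃ : μs < μ₃) (h₃₄ : μ₃ < μ₄)
    (hpos : 0 < cHat α s p₀ μs μ₄)
    (hratio : bHat α s p₀ μs / (cHat α s p₀ μs μ₄ + bHat α s p₀ μs) < 1 / 2) :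
    Rrate α s p₀ η μs μ₂ ≤ Rrate α s p₀ η μs μ₁ ∧
    Rrate α s p₀ η μs μ₃ ≤ Rrate α s p₀ η μs μ₂ ∧
    Rrate α s p₀ η μs μ₄ ≤ Rrate α s p₀ η μs μ₃ := by
  have hμ₂ : 0 < μ₂ := lt_trans hμ₁ h₁₂
  have hμs : 0 < μs := lt_trans hμ₂ h₂s
  have hμ₃ : 0 < μ₃ := lt_trans hμs hs₃
  have hμ₄ : 0 < μ₄ := lt_trans hμ₃ h₃₄
  -- bHat facts
  have hb1 : 0 < bHat α s p₀ μ₁ := bHat_pos hα hs0 hp hμ₁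
  have hb2 : 0 < bHat α s p₀ μ₂ := bHat_pos hα hs0 hp hμ₂
  have hbs : 0 < bHat α s p₀ μs := bHat_pos hα hs0 hp hμs
  have hb12 : bHat α s p₀ μ₁ ≤ bHat α s p₀ μ₂ := bHat_mono hα hα1 hs0 hp.le hμ₁ h₁₂.le
  have hb2s : bHat α s p₀ μ₂ ≤ bHat α s p₀ μs := bHat_mono hα hα1 hs0 hp.le hμ₂ h₂s.le
  -- convexity of G
  have hconv : ConvexOn ℝ (Set.Ioi 0) (Gfun s p₀ (1 - α)) :=
    Gfun_convex (by linarith) hp.le (by linarith) (by linarith)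
  -- memberships
  have m1 : (1 / μ₁ : ℝ) ∈ Set.Ioi (0:ℝ) := by simp [Set.mem_Ioi]; positivity
  have m2 : (1 / μ₂ : ℝ) ∈ Set.Ioi (0:ℝ) := by simp [Set.mem_Ioi]; positivity
  have ms : (1 / μs : ℝ) ∈ Set.Ioi (0:ℝ) := by simp [Set.mem_Ioi]; positivity
  have m3 : (1 / μ₃ : ℝ) ∈ Set.Ioi (0:ℝ) := by simp [Set.mem_Ioi]; positivity
  have m4 : (1 / μ₄ : ℝ) ∈ Set.Ioi (0:ℝ) := by simp [Set.mem_Ioi]; positivity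
  have ord2s : (1:ℝ) / μs < 1 / μ₂ := by gcongr
  have ord12 : (1:ℝ) / μ₂ < 1 / μ₁ := by gcongr
  have ords3 : (1:ℝ) / μ₃ < 1 / μs := by gcongr
  have ord34 : (1:ℝ) / μ₄ < 1 / μ₃ := by gcongr
  have flip : ∀ A B u v : ℝ, (A - B) / (u - v) = (B - A) / (v - u) := by
    intro A B u v
    rw [← neg_div_neg_eq, neg_sub, neg_sub]
  -- cHat chain
  have hc12 : cHat α s p₀ μ₂ μs ≤ cHat α s p₀ μ₁ μs := by
    rw [cHat_eq_slope hμ₂ h₂s, cHat_eq_slope hμ₁ (lt_trans h₁₂ h₂s)]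
    exact hconv.secant_mono ms m2 m1 (ne_of_gt ord2s) (ne_of_gt (lt_trans ord2s ord12))
      ord12.le
  have hc23 : cHat α s p₀ μs μ₃ ≤ cHat α s p₀ μ₂ μs := by
    rw [cHat_eq_slope hμs hs₃, cHat_eq_slope hμ₂ h₂s,
      flip (Gfun s p₀ (1 - α) (1 / μs)) (Gfun s p₀ (1 - α) (1 / μ₃)) (1 / μs) (1 / μ₃)]
    exact hconv.secant_mono ms m3 m2 (ne_of_lt ords3) (ne_of_gt ord2s)
      (le_trans ords3.le ord2s.le)
  have hc34 : cHat α s p₀ μs μ₄ ≤ cHat α s p₀ μs μ₃ := by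
    rw [cHat_eq_slope hμs hs₃, cHat_eq_slope hμs (lt_trans hs₃ h₃₄),
      flip (Gfun s p₀ (1 - α) (1 / μs)) (Gfun s p₀ (1 - α) (1 / μ₃)) (1 / μs) (1 / μ₃),
      flip (Gfun s p₀ (1 - α) (1 / μs)) (Gfun s p₀ (1 - α) (1 / μ₄)) (1 / μs) (1 / μ₄)]
    exact hconv.secant_mono ms m4 m3 (ne_of_lt (lt_trans ord34 ords3)) (ne_of_lt ords3)
      ord34.le
  -- b(μs) < cHat μs μ₄
  have hbsc4 : bHat α s p₀ μs < cHat α s p₀ μs μ₄ := by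
    have hcb : 0 < cHat α s p₀ μs μ₄ + bHat α s p₀ μs := by linarith
    rw [div_lt_iff₀ hcb] at hratio
    linarith
  -- conditions for key_ent
  have hb2c2 : bHat α s p₀ μ₂ ≤ cHat α s p₀ μ₂ μs := by linarith
  have hbsc3 : bHat α s p₀ μs ≤ cHat α s p₀ μs μ₃ := by linarith
  have hK : (0:ℝ) ≤ μs * Real.exp (-μs) := by positivity
  refine ⟨?_, ?_, ?_⟩
  · have h := key_ent hb1 hb12 hb2c2 hc12
    have h2 := mul_le_mul_of_nonneg_left h hK
    simp only [Rrate, if_pos h₂s, if_pos (lt_trans h₁₂ h₂s)]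
    linarith [h2]
  · have h := key_ent hb2 hb2s hbsc3 hc23
    have h2 := mul_le_mul_of_nonneg_left h hK
    simp only [Rrate, if_pos h₂s, if_neg (not_lt.2 hs₃.le)]
    linarith [h2]
  · have h := key_ent hbs le_rfl hbsc4.le hc34
    have h2 := mul_le_mul_of_nonneg_left h hK
    simp only [Rrate, if_neg (not_lt.2 hs₃.le), if_neg (not_lt.2 (lt_trans hs₃ h₃₄).le)]
    linarith [h2]
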